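/- If a relation R on a set X is such that every R-cycle visiting the same 'process' (under a coloring c: X → P with |P| = n) more than twice can be shortened, then R is acyclic if and only if R has no cycle of length at most 2n. More precisely: suppose X is partitioned into n classes and R satisfies that whenever x₀ R x₁ R ... R x_r = x₀ is a cycle in which two distinct indices i < j have c(x_i) = c(x_j), there is a strictly shorter R-cycle. Then R has a cycle iff R has a cycle of length ≤ 2n. -/
import Mathlib


namespace HMSCPaper

/-- If every `R`-cycle in which some color (process) repeats can be
strictly shortened, then `R` has a cycle iff it has a cycle of length at most
`2n`, where `n` is the number of colors. Hence `R` is acyclic iff it has no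
cycle of length ≤ 2n. -/
theorem acyclic_iff_no_short_cycle {X P : Type} [Fintype P] (n : ℕ)
    (hn : Fintype.card P = n) (c : X → P) (R : X → X → Prop)
    (hshort : ∀ (r : ℕ) (x : ℕ → X), 1 ≤ r → x 0 = x r →
      (∀ i < r, R (x i) (x (i + 1))) →
      (∃ i j, i < j ∧ j < r ∧ c (x i) = c (x j)) →
      ∃ (r' : ℕ) (y : ℕ → X), 1 ≤ r' ∧ r' < r ∧ y 0 = y r' ∧
        ∀ i < r', R (y i) (y (i + 1))) :
    (∃ (r : ℕ) (x : ℕ → X), 1 ≤ r ∧ x 0 = x r ∧ ∀ i < r, R (x i) (x (i + 1))) ↔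
    (∃ (r : ℕ) (x : ℕ → X), 1 ≤ r ∧ r ≤ 2 * n ∧ x 0 = x r ∧
      ∀ i < r, R (x i) (x (i + 1))) := by
  constructor
  · rintro ⟨r, x, hr, hcyc, hR⟩
    induction r using Nat.strong_induction_on generalizing x with
    | _ r ih =>
      by_cases hle : r ≤ 2 * n
      · exact ⟨r, x, hr, hle, hcyc, hR⟩
      · push_neg at hle
        -- pigeonhole: r > 2n ≥ n, so some color repeats among indices 0..r-1
        have hcard : Fintype.card P < (Finset.range r).card := by
          simp [hn]; omega
        obtain ⟨i, hi, j, hj, hne, heq⟩ :=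
          Finset.exists_ne_map_eq_of_card_lt_of_maps_to hcard
            (fun a _ => Finset.mem_univ (c (x a)))
        simp only [Finset.mem_range] at hi hj
        have hrep : ∃ i j, i < j ∧ j < r ∧ c (x i) = c (x j) := by
          rcases lt_or_gt_of_ne hne with h | h
          · exact ⟨i, j, h, hj, heq⟩
          · exact ⟨j, i, h, hi, heq.symm⟩
        obtain ⟨r', y, hr', hlt, hcyc', hR'⟩ := hshort r x hr hcyc hR hrep
        exact ih r' hlt y hr' hcyc' hR'
  · rintro ⟨r, x, hr, _, hcyc, hR⟩
    exact ⟨r, x, hr, hcyc, hR⟩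

end HMSCPaper
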